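/- For every M ≥ 0, every finite multiset S of integers contained in [0,M], and every k ≥ 0, the number of reverse [0,M] Dyck sequences with entry multiset S and di equal to k equals the number of affine [0,M] Dyck sequences with entry multiset S and di equal to k. -/

import Mathlib

/-- A finite integer sequence is an *affine Dyck sequence* if each entry is at
most the previous entry plus 1. -/
def AffineDyck (x : List ℤ) : Prop := List.Chain' (fun a b => b ≤ a + 1) x

/-- A finite integer sequence is a *reverse Dyck sequence* if each entry is at
least the previous entry minus 1. -/
def ReverseDyck (x : List ℤ) : Prop := List.Chain' (fun a b => a - 1 ≤ b) x

/-- `di x` is the number of pairs `i < j` with `x i = x j + 1`. -/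
def di (x : List ℤ) : ℕ :=
  ((Finset.range x.length ×ˢ Finset.range x.length).filter
    (fun p => p.1 < p.2 ∧ x.getD p.1 0 = x.getD p.2 0 + 1)).card

namespace ART
open List

/-- inversions-by-one, recursive form -/
def d : List ℤ → ℕ
  | [] => 0
  | a :: l => l.count (a - 1) + d l

/-- coinversions-by-one -/
def d' : List ℤ → ℕ
  | [] => 0
  | a :: l => l.count (a + 1) + d' l

def wt : List ℕ → ℕ
  | [] => 0
  | n :: g => n * g.length + wt g

def wt' : List ℕ → ℕ
  | [] => 0
  | _ :: g => g.sum + wt' g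

def insR (b : ℤ) : List ℕ → List ℤ → List ℤ
  | g, [] => List.replicate (g.headD 0) b
  | g, a :: w =>
    if a = b - 1 then List.replicate (g.headD 0) b ++ a :: insR b g.tail w
    else a :: insR b g w

def extG (b : ℤ) : ℕ → List ℤ → List ℕ
  | n, [] => [n]
  | n, a :: l =>
    if a = b then extG b (n+1) l
    else if a = b - 1 then n :: extG b 0 l else extG b n l

def rmB (b : ℤ) (l : List ℤ) : List ℤ := l.filter (fun a => a != b)

lemma mem_rmB {b a : ℤ} {l : List ℤ} : a ∈ rmB b l ↔ a ∈ l ∧ a ≠ b := by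
  simp [rmB]

lemma rmB_eq (b : ℤ) (l : List ℤ) : rmB b l = l.filter (fun a => decide (a ≠ b)) := by
  unfold rmB; congr 1; funext a; simp [bne, decide_not, _root_.beq_eq_decide]

lemma count_rmB {b c : ℤ} (h : c ≠ b) (l : List ℤ) : (rmB b l).count c = l.count c := by
  induction l with
  | nil => rfl
  | cons a l ih =>
    by_cases hab : a = b
    · subst hab; simpa [rmB, List.count_cons, h, Ne.symm h]
    · simp [rmB, hab, List.count_cons] at *; omega

lemma coe_rmB (b : ℤ) (l : List ℤ) :
    (↑(rmB b l) : Multiset ℤ) = (↑l : Multiset ℤ).filter (fun a => a ≠ b) := by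
  rw [Multiset.filter_coe, rmB_eq]

lemma d_nil : d [] = 0 := rfl
lemma d_cons (a : ℤ) (l : List ℤ) : d (a :: l) = l.count (a - 1) + d l := rfl
lemma d'_cons (a : ℤ) (l : List ℤ) : d' (a :: l) = l.count (a + 1) + d' l := rfl

lemma d_append_singleton (u : List ℤ) (a : ℤ) :
    d (u ++ [a]) = d u + u.count (a + 1) := by
  induction u with
  | nil => simp [d]
  | cons x u ih =>
    simp only [List.cons_append, d_cons, ih, List.count_append, List.count_cons,
      List.count_nil, beq_iff_eq]
    split_ifs with h1 h2 h3 <;> omega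

lemma d_reverse (l : List ℤ) : d l.reverse = d' l := by
  induction l with
  | nil => rfl
  | cons a l ih =>
    simp only [List.reverse_cons, d_append_singleton, ih, d'_cons, List.count_reverse]
    omega

lemma d'_reverse (l : List ℤ) : d' l.reverse = d l := by
  rw [← d_reverse, List.reverse_reverse]

lemma sum_wt_aux (u : List ℕ) (n : ℕ) : wt (u ++ [n]) = wt u + u.sum := by
  induction u with
  | nil => simp [wt]
  | cons m u ih => simp [wt, ih, List.sum_cons]; ring

lemma wt_reverse (g : List ℕ) : wt g.reverse = wt' g := by
  induction g with
  | nil => rfl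
  | cons n g ih => simp [wt', List.reverse_cons, sum_wt_aux, ih, List.sum_reverse]; omega

lemma d_replicate (n : ℕ) (b : ℤ) : d (List.replicate n b) = 0 := by
  induction n with
  | zero => rfl
  | succ n ih =>
    simp [List.replicate_succ, d_cons, ih, List.count_replicate]
    intro h; omega

lemma d_replicate_append (n : ℕ) (b : ℤ) (l : List ℤ) :
    d (List.replicate n b ++ l) = n * l.count (b - 1) + d l := by
  induction n with
  | zero => simp
  | succ n ih =>
    simp only [List.replicate_succ, List.cons_append, d_cons, ih, List.count_append,
      List.count_replicate, beq_iff_eq]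
    rw [if_neg (by omega : ¬ (b = b - 1))]; ring

lemma d'_replicate_append (n : ℕ) (b : ℤ) (l : List ℤ) :
    d' (List.replicate n b ++ l) = n * l.count (b + 1) + d' l := by
  induction n with
  | zero => simp
  | succ n ih =>
    simp only [List.replicate_succ, List.cons_append, d'_cons, ih, List.count_append,
      List.count_replicate, beq_iff_eq]
    rw [if_neg (by omega : ¬ (b = b + 1))]; ring

lemma count_insR {b c : ℤ} (h : c ≠ b) (g : List ℕ) (w : List ℤ) :
    (insR b g w).count c = w.count c := by
  have hbc : ¬ b = c := fun e => h e.symm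
  induction w generalizing g with
  | nil => simp [insR, List.count_replicate, hbc]
  | cons a w ih =>
    by_cases hab : a = b - 1
    · simp [insR, if_pos hab, List.count_append, List.count_replicate, List.count_cons, ih, hbc]
    · simp [insR, if_neg hab, List.count_cons, ih]

lemma countB_insR (b : ℤ) (g : List ℕ) (w : List ℤ)
    (hw : ∀ a ∈ w, a ≠ b) (hg : g.length = w.count (b-1) + 1) :
    (insR b g w).count b = g.sum := by
  induction w generalizing g with
  | nil =>
    obtain ⟨n, g', rfl⟩ : ∃ n g', g = n :: g' := by
      cases g with
      | nil => simp at hg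
      | cons n g' => exact ⟨n, g', rfl⟩
    have : g' = [] := by simp at hg; exact hg
    subst this
    simp [insR, List.count_replicate]
  | cons a w ih =>
    obtain ⟨n, g', rfl⟩ : ∃ n g', g = n :: g' := by
      cases g with
      | nil => simp at hg
      | cons n g' => exact ⟨n, g', rfl⟩
    by_cases hab : a = b - 1
    · have hg' : g'.length = w.count (b-1) + 1 := by
        simp [List.count_cons, hab] at hg; omega
      have hw' : ∀ x ∈ w, x ≠ b := fun x hx => hw x (by simp [hx])
      simp [insR, if_pos hab, List.count_append, List.count_replicate, List.count_cons,
        ih g' hw' hg', hab]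
    · have hg' : (n :: g').length = w.count (b-1) + 1 := by
        simp [List.count_cons, hab] at hg; simpa using hg
      have hw' : ∀ x ∈ w, x ≠ b := fun x hx => hw x (by simp [hx])
      have hane : ¬ (b = a) := fun h => (hw a (by simp)) h.symm
      simp [insR, if_neg hab, List.count_cons, ih _ hw' hg', hane, Ne.symm hane]

lemma mset_insR (b : ℤ) (g : List ℕ) (w : List ℤ)
    (hw : ∀ a ∈ w, a ≠ b) (hg : g.length = w.count (b-1) + 1) :
    (↑(insR b g w) : Multiset ℤ) = Multiset.replicate g.sum b + ↑w := by
  rw [Multiset.ext]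
  intro c
  rw [Multiset.count_add, Multiset.coe_count, Multiset.coe_count, Multiset.count_replicate]
  by_cases hc : c = b
  · subst hc
    rw [countB_insR c g w hw hg, if_pos rfl,
      List.count_eq_zero.mpr (fun hm => (hw c hm) rfl)]
    omega
  · rw [count_insR hc, if_neg (fun e => hc e.symm)]
    omega

lemma d_insR (b : ℤ) (g : List ℕ) (w : List ℤ)
    (hw : ∀ a ∈ w, a ≤ b - 1) (hg : g.length = w.count (b-1) + 1) :
    d (insR b g w) = d w + wt g := by
  induction w generalizing g with
  | nil =>
    obtain ⟨n, g', rfl⟩ : ∃ n g', g = n :: g' := by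
      cases g with
      | nil => simp at hg
      | cons n g' => exact ⟨n, g', rfl⟩
    have : g' = [] := by simpa using hg
    subst this
    simp [insR, d_replicate, d_nil, wt]
  | cons a w ih =>
    obtain ⟨n, g', rfl⟩ : ∃ n g', g = n :: g' := by
      cases g with
      | nil => simp at hg
      | cons n g' => exact ⟨n, g', rfl⟩
    have hw' : ∀ x ∈ w, x ≤ b - 1 := fun x hx => hw x (by simp [hx])
    by_cases hab : a = b - 1
    · subst hab
      have hg' : g'.length = w.count (b-1) + 1 := by
        simp [List.count_cons] at hg; omega
      have hlen : g'.length = w.count (b-1) + 1 := hg'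
      simp only [insR, if_pos rfl, if_true, eq_self_iff_true, List.headD_cons, List.tail_cons]
      rw [d_replicate_append, d_cons, d_cons,
        count_insR (by omega : (b:ℤ) - 1 - 1 ≠ b), ih g' hw' hg',
        List.count_cons_self, count_insR (by omega : (b:ℤ) - 1 ≠ b)]
      rw [show wt (n :: g') = n * g'.length + wt g' from rfl, hlen]
      ring
    · have hg' : (n :: g').length = w.count (b-1) + 1 := by
        simpa [List.count_cons, hab] using hg
      simp only [insR, if_neg hab]
      rw [d_cons, d_cons, count_insR (by
          intro e
          have := hw a (by simp)
          omega : a - 1 ≠ b), ih _ hw' hg']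
      ring

lemma d'_insR (b : ℤ) (g : List ℕ) (w : List ℤ)
    (hw : ∀ a ∈ w, a ≤ b - 1) (hg : g.length = w.count (b-1) + 1) :
    d' (insR b g w) = d' w + wt' g := by
  induction w generalizing g with
  | nil =>
    obtain ⟨n, g', rfl⟩ : ∃ n g', g = n :: g' := by
      cases g with
      | nil => simp at hg
      | cons n g' => exact ⟨n, g', rfl⟩
    have : g' = [] := by simpa using hg
    subst this
    have : d' (List.replicate n b) = 0 := by
      induction n with
      | zero => rfl
      | succ m ihm =>
        simp [List.replicate_succ, d'_cons, ihm, List.count_replicate,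
          show ¬ (b + 1 = b) from by omega]
    simp [insR, this, wt', d']
  | cons a w ih =>
    obtain ⟨n, g', rfl⟩ : ∃ n g', g = n :: g' := by
      cases g with
      | nil => simp at hg
      | cons n g' => exact ⟨n, g', rfl⟩
    have hw' : ∀ x ∈ w, x ≤ b - 1 := fun x hx => hw x (by simp [hx])
    by_cases hab : a = b - 1
    · subst hab
      have hg' : g'.length = w.count (b-1) + 1 := by
        simp [List.count_cons] at hg; omega
      simp only [insR, if_pos rfl, if_true, eq_self_iff_true, List.headD_cons, List.tail_cons]
      rw [d'_replicate_append, d'_cons, d'_cons,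
        show (b:ℤ) - 1 + 1 = b from by ring,
        countB_insR b g' w (fun x hx => by have := hw' x hx; omega) hg',
        ih g' hw' hg']
      have hcb : w.count b = 0 :=
        List.count_eq_zero.mpr (fun hm => by have := hw' b hm; omega)
      have hc1 : List.count (b+1) ((b-1) :: insR b g' w) = 0 := by
        rw [List.count_cons, count_insR (by omega : (b:ℤ)+1 ≠ b),
          List.count_eq_zero.mpr (fun hm => by have := hw' (b+1) hm; omega)]
        simp [show ¬((b:ℤ)+1 = b-1) from by omega, show ¬((b:ℤ)-1 = b+1) from by omega]
      rw [hc1, show wt' (n :: g') = g'.sum + wt' g' from rfl, hcb]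
      ring
    · have hg' : (n :: g').length = w.count (b-1) + 1 := by
        simpa [List.count_cons, hab] using hg
      simp only [insR, if_neg hab]
      rw [d'_cons, d'_cons, count_insR (by
          intro e
          have := hw a (by simp)
          omega : a + 1 ≠ b), ih _ hw' hg']
      rw [show wt' (n :: g') = g'.sum + wt' g' from rfl]
      ring

lemma extG_length (b : ℤ) (n : ℕ) (l : List ℤ) :
    (extG b n l).length = l.count (b-1) + 1 := by
  induction l generalizing n with
  | nil => simp [extG]
  | cons a l ih =>
    by_cases hab : a = b
    · have : ¬ (a = b - 1) := by omega
      simp [extG, hab, ih, List.count_cons, show ¬ (b = b -1) from by omega]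
    · by_cases hab1 : a = b - 1
      · simp [extG, hab, hab1, ih, List.count_cons]
      · simp [extG, hab, hab1, ih, List.count_cons, show ¬ (a = b -1) from hab1]

lemma extG_sum (b : ℤ) (n : ℕ) (l : List ℤ) :
    (extG b n l).sum = n + l.count b := by
  induction l generalizing n with
  | nil => simp [extG]
  | cons a l ih =>
    by_cases hab : a = b
    · simp [extG, hab, ih, List.count_cons]
      omega
    · by_cases hab1 : a = b - 1
      · simp [extG, hab, hab1, ih, List.count_cons, show ¬(b-1 = b) from by omega]
      · simp [extG, hab, hab1, ih, List.count_cons, show ¬(a = b) from hab]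

lemma extG_replicate_append (b : ℤ) (n j : ℕ) (l : List ℤ) :
    extG b n (List.replicate j b ++ l) = extG b (n + j) l := by
  induction j generalizing n with
  | zero => simp [extG]
  | succ j ih =>
    rw [List.replicate_succ, List.cons_append,
      show extG b n (b :: (List.replicate j b ++ l)) = extG b (n+1) (List.replicate j b ++ l)
        from by simp [extG],
      ih]
    congr 1
    omega

lemma extG_replicate (b : ℤ) (n j : ℕ) :
    extG b n (List.replicate j b) = [n + j] := by
  have := extG_replicate_append b n j []
  simpa [extG] using this

lemma headD_cons_tail {α : Type*} (l : List α) (hd : l ≠ []) (dflt : α) :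
    l.headD dflt :: l.tail = l := by
  cases l with
  | nil => exact absurd rfl hd
  | cons a l => rfl

lemma extG_insR (b : ℤ) (g : List ℕ) (w : List ℤ) (n : ℕ)
    (hw : ∀ a ∈ w, a ≤ b - 1) (hg : g.length = w.count (b-1) + 1) :
    extG b n (insR b g w) = (n + g.headD 0) :: g.tail := by
  induction w generalizing g n with
  | nil =>
    obtain ⟨m, g', rfl⟩ : ∃ m g', g = m :: g' := by
      cases g with
      | nil => simp at hg
      | cons m g' => exact ⟨m, g', rfl⟩
    have : g' = [] := by simpa using hg
    subst this
    simp [insR, extG_replicate]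
  | cons a w ih =>
    obtain ⟨m, g', rfl⟩ : ∃ m g', g = m :: g' := by
      cases g with
      | nil => simp at hg
      | cons m g' => exact ⟨m, g', rfl⟩
    have hw' : ∀ x ∈ w, x ≤ b - 1 := fun x hx => hw x (by simp [hx])
    by_cases hab : a = b - 1
    · subst hab
      have hg' : g'.length = w.count (b-1) + 1 := by
        simp [List.count_cons] at hg; omega
      simp only [insR, if_pos rfl, if_true, List.headD_cons, List.tail_cons]
      rw [extG_replicate_append]
      simp only [extG, if_neg (by omega : ¬ (b:ℤ) - 1 = b), if_pos rfl, if_true]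
      rw [ih g' 0 hw' hg']
      rw [show (0 + g'.headD 0) = g'.headD 0 from by omega,
        headD_cons_tail g' (by intro h; rw [h] at hg'; simp at hg') 0]
    · have hg' : (m :: g').length = w.count (b-1) + 1 := by
        simpa [List.count_cons, hab] using hg
      have hanb : ¬ (a = b) := by have := hw a (by simp); omega
      simp only [insR, if_neg hab]
      simp only [extG, if_neg hanb, if_neg hab]
      exact ih _ n hw' hg'

lemma rmB_insR (b : ℤ) (g : List ℕ) (w : List ℤ) (hw : ∀ a ∈ w, a ≠ b) :
    rmB b (insR b g w) = w := by
  induction w generalizing g with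
  | nil =>
    simp [insR, rmB, List.filter_replicate]
  | cons a w ih =>
    have hw' : ∀ x ∈ w, x ≠ b := fun x hx => hw x (by simp [hx])
    have hab : a ≠ b := hw a (by simp)
    by_cases hab1 : a = b - 1
    · simp only [insR, if_pos hab1, rmB, List.filter_append, List.filter_replicate]
      have h1 : (b != b) = false := by simp
      have h2 : (a != b) = true := by simpa using hab
      simp [h1, h2]
      exact ih g.tail hw'
    · simp only [insR, if_neg hab1, rmB, List.filter_cons]
      have h2 : (a != b) = true := by simpa using hab
      simp [h2]
      exact ih g hw'

lemma insR_extG (b : ℤ) (x : List ℤ) (n : ℕ)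
    (hrev : ReverseDyck (List.replicate n b ++ x)) (hx : ∀ a ∈ x, a ≤ b) :
    insR b (extG b n x) (rmB b x) = List.replicate n b ++ x := by
  induction x generalizing n with
  | nil => simp [extG, rmB, insR]
  | cons a x ih =>
    have hx' : ∀ c ∈ x, c ≤ b := fun c hc => hx c (by simp [hc])
    by_cases hab : a = b
    · rw [hab] at hrev ⊢
      have heq : List.replicate n b ++ b :: x = List.replicate (n+1) b ++ x := by
        rw [List.replicate_succ']
        simp
      rw [heq] at hrev ⊢
      have : extG b n (b :: x) = extG b (n+1) x := by simp [extG]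
      rw [this, show rmB b (b :: x) = rmB b x from by simp [rmB]]
      exact ih (n+1) hrev hx'
    · by_cases hab1 : a = b - 1
      · have hrevx : ReverseDyck x := by
          have := hrev.right_of_append
          exact (List.isChain_cons.mp this).2
        have : extG b n (a :: x) = n :: extG b 0 x := by
          simp [extG, hab, hab1]
        rw [this, show rmB b (a :: x) = a :: rmB b x from by
          simp [rmB, List.filter_cons, show (a != b) = true from by simpa using hab]]
        simp only [insR, if_pos hab1, List.headD_cons, List.tail_cons]
        have := ih 0 (by simpa using hrevx) hx'
        simp only [List.replicate_zero, List.nil_append] at this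
        rw [this]
      · -- a ≤ b - 2, so n = 0
        have hab2 : a ≤ b - 2 := by
          have := hx a (by simp); omega
        have hn : n = 0 := by
          by_contra hne
          obtain ⟨n', rfl⟩ : ∃ n', n = n' + 1 := ⟨n - 1, by omega⟩
          have : ReverseDyck (List.replicate n' b ++ b :: a :: x) := by
            rwa [← show List.replicate (n'+1) b ++ a :: x
                = List.replicate n' b ++ b :: a :: x from by
              rw [List.replicate_succ']; simp]
          have h2 := this.right_of_append
          have := (List.isChain_cons_cons.mp h2).1
          omega
        subst hn
        have hrevx : ReverseDyck x := by
          have := hrev.right_of_append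
          exact (List.isChain_cons.mp this).2
        have : extG b 0 (a :: x) = extG b 0 x := by simp [extG, hab, hab1]
        rw [this, show rmB b (a :: x) = a :: rmB b x from by
          simp [rmB, List.filter_cons, show (a != b) = true from by simpa using hab]]
        simp only [insR, if_neg hab1]
        have := ih 0 (by simpa using hrevx) hx'
        simp only [List.replicate_zero, List.nil_append] at this
        rw [this]
        simp

lemma head_insR (b : ℤ) (g : List ℕ) (w : List ℤ) :
    ∀ h ∈ (insR b g w).head?, h = b ∨ h ∈ w.head? := by
  intro h hh
  cases w with
  | nil =>
    simp only [insR] at hh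
    cases m : g.headD 0 with
    | zero => rw [m] at hh; simp at hh
    | succ j =>
      rw [m, List.replicate_succ] at hh
      simp at hh
      left; exact hh.symm
  | cons a w =>
    by_cases hab : a = b - 1
    · simp only [insR, if_pos hab] at hh
      cases m : g.headD 0 with
      | zero => rw [m] at hh; simp at hh; right; simp [hh]
      | succ j =>
        rw [m, List.replicate_succ] at hh
        simp at hh
        left; exact hh.symm
    · simp only [insR, if_neg hab] at hh
      simp at hh
      right; simp [hh]

lemma rev_replicate (n : ℕ) (b : ℤ) : ReverseDyck (List.replicate n b) := by
  induction n with
  | zero => exact List.isChain_nil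
  | succ n ih =>
    rw [List.replicate_succ]
    apply List.isChain_cons.mpr
    refine ⟨?_, ih⟩
    intro h hh
    cases n with
    | zero => simp at hh
    | succ m =>
      rw [List.replicate_succ] at hh
      simp at hh
      omega

lemma rev_insR (b : ℤ) (g : List ℕ) (w : List ℤ)
    (hrev : ReverseDyck w) (hw : ∀ a ∈ w, a ≤ b - 1) :
    ReverseDyck (insR b g w) := by
  induction w generalizing g with
  | nil => exact rev_replicate _ _
  | cons a w ih =>
    have hw' : ∀ x ∈ w, x ≤ b - 1 := fun x hx => hw x (by simp [hx])
    have hrevw : ReverseDyck w := (List.isChain_cons.mp hrev).2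
    have hhead : ∀ h ∈ w.head?, a - 1 ≤ h := (List.isChain_cons.mp hrev).1
    by_cases hab : a = b - 1
    · simp only [insR, if_pos hab]
      apply List.IsChain.append (rev_replicate _ _)
      · apply List.isChain_cons.mpr
        refine ⟨?_, ih g.tail hrevw hw'⟩
        intro h hh
        rcases head_insR b g.tail w h hh with h1 | h1
        · omega
        · exact hhead h h1
      · intro x hx y hy
        have hxb : x = b := by
          have := List.mem_of_mem_getLast? hx
          exact List.eq_of_mem_replicate this
        simp at hy
        omega
    · simp only [insR, if_neg hab]
      apply List.isChain_cons.mpr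
      refine ⟨?_, ih g hrevw hw'⟩
      intro h hh
      rcases head_insR b g w h hh with h1 | h1
      · have := hw a (by simp)
        omega
      · exact hhead h h1

lemma rev_cons_rmB (b : ℤ) (x : List ℤ) (hrev : ReverseDyck x) (hx : ∀ a ∈ x, a ≤ b) :
    ∀ c ≤ b, (∀ u ∈ x.head?, c - 1 ≤ u) → List.Chain' (fun a b => a - 1 ≤ b) (c :: rmB b x) := by
  induction x with
  | nil =>
    intro c _ _
    simp [rmB]; exact List.isChain_singleton c
  | cons a x ih =>
    intro c hcb hchead
    have hca : c - 1 ≤ a := by have := hchead a (by simp); omega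
    have hrevx : ReverseDyck x := (List.isChain_cons.mp hrev).2
    have hx' : ∀ u ∈ x, u ≤ b := fun u hu => hx u (by simp [hu])
    have hheadx : ∀ u ∈ x.head?, a - 1 ≤ u := (List.isChain_cons.mp hrev).1
    by_cases hab : a = b
    · rw [show rmB b (a :: x) = rmB b x from by simp [rmB, hab]]
      apply ih hrevx hx' c hcb
      intro u hu
      have := hheadx u hu
      omega
    · rw [show rmB b (a :: x) = a :: rmB b x from by
        simp [rmB, List.filter_cons, show (a != b) = true from by simpa using hab]]
      apply List.isChain_cons.mpr
      refine ⟨?_, ih hrevx hx' a (hx a (by simp)) hheadx⟩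
      intro u hu
      simp at hu
      omega

lemma rev_rmB (b : ℤ) (x : List ℤ) (hrev : ReverseDyck x) (hx : ∀ a ∈ x, a ≤ b) :
    ReverseDyck (rmB b x) := by
  cases x with
  | nil => exact List.isChain_nil
  | cons a x =>
    have hrevx : ReverseDyck x := (List.isChain_cons.mp hrev).2
    have hx' : ∀ u ∈ x, u ≤ b := fun u hu => hx u (by simp [hu])
    by_cases hab : a = b
    · rw [show rmB b (a :: x) = rmB b x from by simp [rmB, hab]]
      exact rev_rmB b x hrevx hx'
    · rw [show rmB b (a :: x) = a :: rmB b x from by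
        simp [rmB, List.filter_cons, show (a != b) = true from by simpa using hab]]
      exact rev_cons_rmB b x hrevx hx' a (hx a (by simp)) (List.isChain_cons.mp hrev).1

lemma aff_iff_rev_reverse (x : List ℤ) : AffineDyck x ↔ ReverseDyck x.reverse := by
  unfold AffineDyck ReverseDyck
  show List.IsChain _ x ↔ List.IsChain _ x.reverse
  rw [List.isChain_reverse]
  constructor
  · intro h; exact h.imp (fun a b hab => by simp [flip] at *; omega)
  · intro h; exact h.imp (fun a b hab => by simp [flip] at *; omega)

lemma rmB_reverse (b : ℤ) (x : List ℤ) : rmB b x.reverse = (rmB b x).reverse := by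
  simp [rmB, List.filter_reverse]

lemma count_eq_sum_range (l : List ℤ) (v : ℤ) :
    l.count v = ∑ j ∈ Finset.range l.length, (if l.getD j 0 = v then 1 else 0) := by
  induction l with
  | nil => simp
  | cons a l ih =>
    rw [List.length_cons, Finset.sum_range_succ', List.count_cons]
    simp only [List.getD_cons_succ, List.getD_cons_zero]
    rw [← ih]
    by_cases h : a = v
    · simp [h]
    · simp [h, show ¬ (v = a) from fun e => h e.symm]

lemma di_eq_d (l : List ℤ) : di l = d l := by
  induction l with
  | nil => simp [di, d]
  | cons a l ih =>
    rw [di, Finset.card_filter, Finset.sum_product]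
    rw [List.length_cons, Finset.sum_range_succ']
    have h0 : ∑ j ∈ Finset.range (l.length + 1),
        (if (0 < j ∧ (a :: l).getD 0 0 = (a :: l).getD j 0 + 1) then 1 else 0)
        = l.count (a - 1) := by
      rw [Finset.sum_range_succ']
      simp only [List.getD_cons_succ, List.getD_cons_zero]
      rw [count_eq_sum_range]
      simp only [Nat.succ_pos, true_and, lt_irrefl, false_and, if_false, add_zero]
      apply Finset.sum_congr rfl
      intro j _
      have : (a = l[j]?.getD 0 + 1) ↔ (l[j]?.getD 0 = a - 1) := by omega
      simp [this]
    have h1 : ∀ i, ∑ j ∈ Finset.range (l.length + 1),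
        (if (i + 1 < j ∧ (a :: l).getD (i+1) 0 = (a :: l).getD j 0 + 1) then 1 else 0)
        = ∑ j ∈ Finset.range l.length,
        (if (i < j ∧ l.getD i 0 = l.getD j 0 + 1) then 1 else 0) := by
      intro i
      rw [Finset.sum_range_succ']
      simp only [List.getD_cons_succ]
      simp [Nat.add_lt_add_iff_right]
    rw [h0]
    have h2 : ∑ i ∈ Finset.range l.length, ∑ j ∈ Finset.range (l.length + 1),
        (if (i + 1 < j ∧ (a :: l).getD (i+1) 0 = (a :: l).getD j 0 + 1) then 1 else 0) = di l := by
      rw [di, Finset.card_filter, Finset.sum_product]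
      exact Finset.sum_congr rfl (fun i _ => h1 i)
    rw [h2, ih, d_cons]
    omega

lemma finite_mset (S : Multiset ℤ) (p q : List ℤ → Prop) :
    Finite {x : List ℤ // p x ∧ (↑x : Multiset ℤ) = S ∧ q x} := by
  classical
  have h1 : {x : List ℤ | (↑x : Multiset ℤ) = S}.Finite := by
    apply Set.Finite.ofFinset S.toList.permutations.toFinset
    intro x
    simp only [List.mem_toFinset, List.mem_permutations, Set.mem_setOf_eq]
    conv_rhs => rw [← Multiset.coe_toList S]
    exact Multiset.coe_eq_coe.symm
  have h2 : {x : List ℤ | p x ∧ (↑x : Multiset ℤ) = S ∧ q x}.Finite :=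
    h1.subset (fun x hx => hx.2.1)
  exact h2.to_subtype

lemma finite_G (L m : ℕ) : Finite {g : List ℕ // g.length = L ∧ g.sum = m} := by
  apply Finite.of_injective
    (f := fun (g : {g : List ℕ // g.length = L ∧ g.sum = m}) =>
      (fun i : Fin L => (⟨g.1.getD i 0, by
        have hl := g.2.1
        have hs := g.2.2
        have hi : (i : ℕ) < g.1.length := by rw [hl]; exact i.2
        have hmem : g.1.getD i 0 ∈ g.1 := by
          rw [List.getD_eq_getElem g.1 0 hi]
          exact List.getElem_mem hi
        have : g.1.getD (i:ℕ) 0 ≤ g.1.sum :=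
          List.single_le_sum (fun x _ => Nat.zero_le x) _ hmem
        omega⟩ : Fin (m+1))))
  rintro ⟨g1, hl1, hs1⟩ ⟨g2, hl2, hs2⟩ h
  simp only [funext_iff] at h
  apply Subtype.ext
  apply List.ext_getElem (by rw [hl1, hl2])
  intro i hi1 hi2
  have := h ⟨i, by rw [← hl1]; exact hi1⟩
  simp only [Fin.mk.injEq] at this
  rwa [List.getD_eq_getElem g1 0 hi1, List.getD_eq_getElem g2 0 hi2] at this

lemma card_sigma_congr {ι : Type*} [Finite ι] {F G : ι → Type*}
    [∀ i, Finite (F i)] [∀ i, Finite (G i)]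
    (h : ∀ i, Nat.card (F i) = Nat.card (G i)) :
    Nat.card (Σ i, F i) = Nat.card (Σ i, G i) := by
  classical
  haveI := Fintype.ofFinite ι
  haveI := fun i => Fintype.ofFinite (F i)
  haveI := fun i => Fintype.ofFinite (G i)
  rw [Nat.card_eq_fintype_card, Nat.card_eq_fintype_card, Fintype.card_sigma,
    Fintype.card_sigma]
  apply Finset.sum_congr rfl
  intro i _
  have := h i
  rwa [Nat.card_eq_fintype_card, Nat.card_eq_fintype_card] at this

lemma sig_ext {A B : Type*} {qq : A → Prop} {P : A → B → Prop}
    (x y : Σ g : Subtype qq, {w : B // P g.1 w}) (h1 : x.1.1 = y.1.1) (h2 : x.2.1 = y.2.1) :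
    x = y := by
  rcases x with ⟨⟨g, hg⟩, ⟨w, hw⟩⟩
  rcases y with ⟨⟨g', hg'⟩, ⟨w', hw'⟩⟩
  dsimp at h1 h2
  subst h1
  subst h2
  rfl

section Peel

variable (S : Multiset ℤ) (b : ℤ) (hmax : ∀ a ∈ S, a ≤ b) (k : ℕ)

lemma hsplit_lemma : Multiset.replicate (S.count b) b + S.filter (fun a => a ≠ b) = S := by
  classical
  rw [Multiset.ext]
  intro c
  rw [Multiset.count_add, Multiset.count_replicate, Multiset.count_filter]
  by_cases hc : c = b
  · subst hc; simp
  · simp [hc, show ¬ b = c from fun e => hc e.symm]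

def equivR :
    {x : List ℤ // ReverseDyck x ∧ (↑x : Multiset ℤ) = S ∧ d x = k} ≃
    Σ g : {g : List ℕ // g.length = S.count (b-1) + 1 ∧ g.sum = S.count b},
      {w : List ℤ // ReverseDyck w ∧
        (↑w : Multiset ℤ) = S.filter (fun a => a ≠ b) ∧ d w + wt g.1 = k} where
  toFun x := by
    obtain ⟨x, hR, hxS, hdx⟩ := x
    have hxb : ∀ a ∈ x, a ≤ b := fun a ha => hmax a (by rw [← hxS]; exact_mod_cast ha)
    have hcnt : ∀ c : ℤ, x.count c = S.count c := fun c => by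
      rw [← Multiset.coe_count, hxS]
    have hwb : ∀ a ∈ rmB b x, a ≤ b - 1 := by
      intro a ha
      rw [mem_rmB] at ha
      have := hxb a ha.1
      have := ha.2
      omega
    have hlen : (extG b 0 x).length = (rmB b x).count (b-1) + 1 := by
      rw [extG_length, count_rmB (by omega : (b:ℤ)-1 ≠ b)]
    have hrecon : insR b (extG b 0 x) (rmB b x) = x := by
      have := insR_extG b x 0 (by simpa using hR) hxb
      simpa using this
    refine ⟨⟨extG b 0 x, ?_, ?_⟩, ⟨rmB b x, ?_, ?_, ?_⟩⟩
    · rw [extG_length, hcnt]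
    · rw [extG_sum, hcnt]; omega
    · exact rev_rmB b x hR hxb
    · rw [coe_rmB, hxS]
    · show d (rmB b x) + wt (extG b 0 x) = k
      have := d_insR b (extG b 0 x) (rmB b x) hwb hlen
      rw [hrecon] at this
      omega
  invFun gw := by
    obtain ⟨⟨g, hgL, hgm⟩, ⟨w, hRw, hwS', hdw⟩⟩ := gw
    have hwmem : ∀ a ∈ w, a ∈ S ∧ a ≠ b := by
      intro a ha
      have : a ∈ (↑w : Multiset ℤ) := by exact_mod_cast ha
      rw [hwS', Multiset.mem_filter] at this
      exact this
    have hwb : ∀ a ∈ w, a ≤ b - 1 := by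
      intro a ha
      have h1 := (hwmem a ha).1
      have h2 := (hwmem a ha).2
      have := hmax a h1
      omega
    have hwnb : ∀ a ∈ w, a ≠ b := fun a ha => (hwmem a ha).2
    have hwcnt : ∀ c : ℤ, c ≠ b → w.count c = S.count c := by
      intro c hc
      rw [← Multiset.coe_count, hwS', Multiset.count_filter, if_pos hc]
    have hlen : g.length = w.count (b-1) + 1 := by
      rw [hwcnt (b-1) (by omega)]; exact hgL
    refine ⟨insR b g w, ?_, ?_, ?_⟩
    · exact rev_insR b g w hRw hwb
    · rw [mset_insR b g w hwnb hlen, hwS', hgm, hsplit_lemma]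
    · have hdw' : d w + wt g = k := hdw
      rw [d_insR b g w hwb hlen]
      omega
  left_inv := by
    rintro ⟨x, hR, hxS, hdx⟩
    apply Subtype.ext
    have hxb : ∀ a ∈ x, a ≤ b := fun a ha => hmax a (by rw [← hxS]; exact_mod_cast ha)
    have := insR_extG b x 0 (by simpa using hR) hxb
    simpa using this
  right_inv := by
    rintro ⟨⟨g, hgL, hgm⟩, ⟨w, hRw, hwS', hdw⟩⟩
    have hwmem : ∀ a ∈ w, a ∈ S ∧ a ≠ b := by
      intro a ha
      have : a ∈ (↑w : Multiset ℤ) := by exact_mod_cast ha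
      rw [hwS', Multiset.mem_filter] at this
      exact this
    have hwb : ∀ a ∈ w, a ≤ b - 1 := by
      intro a ha
      have h1 := (hwmem a ha).1
      have h2 := (hwmem a ha).2
      have := hmax a h1
      omega
    have hwnb : ∀ a ∈ w, a ≠ b := fun a ha => (hwmem a ha).2
    have hlen : g.length = w.count (b-1) + 1 := by
      rw [← Multiset.coe_count, hwS', Multiset.count_filter, if_pos (by omega : (b:ℤ)-1 ≠ b)]
      exact hgL
    apply sig_ext (P := fun v w => ReverseDyck w ∧ (↑w : Multiset ℤ) = S.filter (fun a => a ≠ b) ∧ d w + wt v = k)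
    · show extG b 0 (insR b g w) = g
      rw [extG_insR b g w 0 hwb hlen]
      have hgne : g ≠ [] := by
        intro h; rw [h] at hgL; simp at hgL
      rw [Nat.zero_add]
      exact headD_cons_tail g hgne 0
    · show rmB b (insR b g w) = w
      exact rmB_insR b g w hwnb

end Peel

section PeelA

variable (S : Multiset ℤ) (b : ℤ) (hmax : ∀ a ∈ S, a ≤ b) (k : ℕ)

def equivA :
    {x : List ℤ // AffineDyck x ∧ (↑x : Multiset ℤ) = S ∧ d x = k} ≃
    Σ g : {g : List ℕ // g.length = S.count (b-1) + 1 ∧ g.sum = S.count b},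
      {w : List ℤ // AffineDyck w ∧
        (↑w : Multiset ℤ) = S.filter (fun a => a ≠ b) ∧ d w + wt g.1 = k} where
  toFun x := by
    obtain ⟨x, hA, hxS, hdx⟩ := x
    have hR : ReverseDyck x.reverse := (aff_iff_rev_reverse x).mp hA
    have hxb : ∀ a ∈ x.reverse, a ≤ b := by
      intro a ha
      rw [List.mem_reverse] at ha
      exact hmax a (by rw [← hxS]; exact_mod_cast ha)
    have hcnt : ∀ c : ℤ, x.reverse.count c = S.count c := fun c => by
      rw [List.count_reverse, ← Multiset.coe_count, hxS]
    have hwb : ∀ a ∈ rmB b x.reverse, a ≤ b - 1 := by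
      intro a ha
      rw [mem_rmB] at ha
      have := hxb a ha.1
      have := ha.2
      omega
    have hlen : (extG b 0 x.reverse).length = (rmB b x.reverse).count (b-1) + 1 := by
      rw [extG_length, count_rmB (by omega : (b:ℤ)-1 ≠ b)]
    have hrecon : insR b (extG b 0 x.reverse) (rmB b x.reverse) = x.reverse := by
      have := insR_extG b x.reverse 0 (by simpa using hR) hxb
      simpa using this
    refine ⟨⟨(extG b 0 x.reverse).reverse, ?_, ?_⟩, ⟨rmB b x, ?_, ?_, ?_⟩⟩
    · rw [List.length_reverse, extG_length, List.count_reverse, ← Multiset.coe_count, hxS]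
    · rw [List.sum_reverse, extG_sum, hcnt]; omega
    · rw [aff_iff_rev_reverse, ← rmB_reverse]
      exact rev_rmB b x.reverse hR hxb
    · rw [coe_rmB, hxS]
    · show d (rmB b x) + wt (extG b 0 x.reverse).reverse = k
      have hd' := d'_insR b (extG b 0 x.reverse) (rmB b x.reverse) hwb hlen
      rw [hrecon] at hd'
      -- d' x.reverse = d' (rmB b x.reverse) + wt' (extG b 0 x.reverse)
      rw [d'_reverse] at hd'
      rw [rmB_reverse, d'_reverse] at hd'
      rw [wt_reverse]
      omega
  invFun gw := by
    obtain ⟨⟨g, hgL, hgm⟩, ⟨w, hAw, hwS', hdw⟩⟩ := gw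
    have hdw' : d w + wt g = k := hdw
    have hRw : ReverseDyck w.reverse := (aff_iff_rev_reverse w).mp hAw
    have hwmem : ∀ a ∈ w, a ∈ S ∧ a ≠ b := by
      intro a ha
      have : a ∈ (↑w : Multiset ℤ) := by exact_mod_cast ha
      rw [hwS', Multiset.mem_filter] at this
      exact this
    have hwb : ∀ a ∈ w.reverse, a ≤ b - 1 := by
      intro a ha
      rw [List.mem_reverse] at ha
      have h1 := (hwmem a ha).1
      have h2 := (hwmem a ha).2
      have := hmax a h1
      omega
    have hwnb : ∀ a ∈ w.reverse, a ≠ b := by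
      intro a ha
      rw [List.mem_reverse] at ha
      exact (hwmem a ha).2
    have hlen : g.reverse.length = w.reverse.count (b-1) + 1 := by
      rw [List.length_reverse, List.count_reverse, ← Multiset.coe_count, hwS',
        Multiset.count_filter, if_pos (by omega : (b:ℤ)-1 ≠ b)]
      exact hgL
    refine ⟨(insR b g.reverse w.reverse).reverse, ?_, ?_, ?_⟩
    · rw [aff_iff_rev_reverse, List.reverse_reverse]
      exact rev_insR b g.reverse w.reverse hRw hwb
    · rw [Multiset.coe_reverse, mset_insR b g.reverse w.reverse hwnb hlen,
        List.sum_reverse, Multiset.coe_reverse, hwS', hgm, hsplit_lemma]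
    · show d (insR b g.reverse w.reverse).reverse = k
      rw [d_reverse, d'_insR b g.reverse w.reverse hwb hlen, d'_reverse]
      have hwtg : wt' g.reverse = wt g := by
        rw [← wt_reverse, List.reverse_reverse]
      omega
  left_inv := by
    rintro ⟨x, hA, hxS, hdx⟩
    apply Subtype.ext
    show (insR b ((extG b 0 x.reverse).reverse).reverse ((rmB b x).reverse)).reverse = x
    have hR : ReverseDyck x.reverse := (aff_iff_rev_reverse x).mp hA
    have hxb : ∀ a ∈ x.reverse, a ≤ b := by
      intro a ha
      rw [List.mem_reverse] at ha
      exact hmax a (by rw [← hxS]; exact_mod_cast ha)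
    have hrec := insR_extG b x.reverse 0 (by simpa using hR) hxb
    rw [List.reverse_reverse, ← rmB_reverse]
    simp only [List.replicate_zero, List.nil_append] at hrec
    rw [hrec, List.reverse_reverse]
  right_inv := by
    rintro ⟨⟨g, hgL, hgm⟩, ⟨w, hAw, hwS', hdw⟩⟩
    have hRw : ReverseDyck w.reverse := (aff_iff_rev_reverse w).mp hAw
    have hwmem : ∀ a ∈ w, a ∈ S ∧ a ≠ b := by
      intro a ha
      have : a ∈ (↑w : Multiset ℤ) := by exact_mod_cast ha
      rw [hwS', Multiset.mem_filter] at this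
      exact this
    have hwb : ∀ a ∈ w.reverse, a ≤ b - 1 := by
      intro a ha
      rw [List.mem_reverse] at ha
      have h1 := (hwmem a ha).1
      have h2 := (hwmem a ha).2
      have := hmax a h1
      omega
    have hwnb : ∀ a ∈ w.reverse, a ≠ b := by
      intro a ha
      rw [List.mem_reverse] at ha
      exact (hwmem a ha).2
    have hlen : g.reverse.length = w.reverse.count (b-1) + 1 := by
      rw [List.length_reverse, List.count_reverse, ← Multiset.coe_count, hwS',
        Multiset.count_filter, if_pos (by omega : (b:ℤ)-1 ≠ b)]
      exact hgL
    have hgrne : g.reverse ≠ [] := by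
      intro h
      have h2 := congrArg List.length h
      rw [List.length_reverse, hgL] at h2
      simp at h2
    apply sig_ext (P := fun v w => AffineDyck w ∧
      (↑w : Multiset ℤ) = S.filter (fun a => a ≠ b) ∧ d w + wt v = k)
    · show (extG b 0 ((insR b g.reverse w.reverse).reverse).reverse).reverse = g
      rw [List.reverse_reverse, extG_insR b g.reverse w.reverse 0 hwb hlen, Nat.zero_add,
        headD_cons_tail g.reverse hgrne 0, List.reverse_reverse]
    · show rmB b ((insR b g.reverse w.reverse).reverse) = w
      rw [rmB_reverse, rmB_insR b g.reverse w.reverse hwnb, List.reverse_reverse]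

end PeelA

theorem key (S : Multiset ℤ) : ∀ k : ℕ,
    Nat.card {x : List ℤ // ReverseDyck x ∧ (↑x : Multiset ℤ) = S ∧ d x = k} =
    Nat.card {x : List ℤ // AffineDyck x ∧ (↑x : Multiset ℤ) = S ∧ d x = k} := by
  induction S using Multiset.strongInductionOn with
  | _ S IH =>
    intro k
    by_cases h0 : S = 0
    · subst h0
      apply Nat.card_congr
      apply Equiv.subtypeEquivRight
      intro x
      constructor
      · rintro ⟨h1, h2, h3⟩
        have hx : x = [] := (Multiset.coe_eq_zero x).mp h2
        subst hx
        exact ⟨List.isChain_nil, h2, h3⟩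
      · rintro ⟨h1, h2, h3⟩
        have hx : x = [] := (Multiset.coe_eq_zero x).mp h2
        subst hx
        exact ⟨List.isChain_nil, h2, h3⟩
    · have hne : S.toFinset.Nonempty := Multiset.toFinset_nonempty.mpr h0
      set b := S.toFinset.max' hne with hb
      have hbS : b ∈ S := Multiset.mem_toFinset.mp (S.toFinset.max'_mem hne)
      have hmax : ∀ a ∈ S, a ≤ b := fun a ha =>
        Finset.le_max' _ a (Multiset.mem_toFinset.mpr ha)
      have hlt : S.filter (fun a => a ≠ b) < S := by
        apply lt_of_le_of_ne (Multiset.filter_le _ S)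
        intro h
        have h1 : Multiset.count b (S.filter (fun a => a ≠ b)) = 0 := by
          rw [Multiset.count_filter]
          simp
        rw [h] at h1
        have h2 : 0 < Multiset.count b S := Multiset.count_pos.mpr hbS
        omega
      rw [Nat.card_congr (equivR S b hmax k), Nat.card_congr (equivA S b hmax k)]
      haveI : Finite {g : List ℕ // g.length = S.count (b-1) + 1 ∧ g.sum = S.count b} :=
        finite_G _ _
      haveI : ∀ g : {g : List ℕ // g.length = S.count (b-1) + 1 ∧ g.sum = S.count b},
          Finite {w : List ℤ // ReverseDyck w ∧
            (↑w : Multiset ℤ) = S.filter (fun a => a ≠ b) ∧ d w + wt g.1 = k} :=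
        fun g => finite_mset _ _ _
      haveI : ∀ g : {g : List ℕ // g.length = S.count (b-1) + 1 ∧ g.sum = S.count b},
          Finite {w : List ℤ // AffineDyck w ∧
            (↑w : Multiset ℤ) = S.filter (fun a => a ≠ b) ∧ d w + wt g.1 = k} :=
        fun g => finite_mset _ _ _
      apply card_sigma_congr
      intro g
      by_cases hle : wt g.1 ≤ k
      · have e1 : {w : List ℤ // ReverseDyck w ∧
            (↑w : Multiset ℤ) = S.filter (fun a => a ≠ b) ∧ d w + wt g.1 = k} ≃
            {w : List ℤ // ReverseDyck w ∧
            (↑w : Multiset ℤ) = S.filter (fun a => a ≠ b) ∧ d w = k - wt g.1} :=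
          Equiv.subtypeEquivRight (by
            intro w
            constructor
            · rintro ⟨a1, a2, a3⟩; exact ⟨a1, a2, by omega⟩
            · rintro ⟨a1, a2, a3⟩; exact ⟨a1, a2, by omega⟩)
        have e2 : {w : List ℤ // AffineDyck w ∧
            (↑w : Multiset ℤ) = S.filter (fun a => a ≠ b) ∧ d w + wt g.1 = k} ≃
            {w : List ℤ // AffineDyck w ∧
            (↑w : Multiset ℤ) = S.filter (fun a => a ≠ b) ∧ d w = k - wt g.1} :=
          Equiv.subtypeEquivRight (by
            intro w
            constructor
            · rintro ⟨a1, a2, a3⟩; exact ⟨a1, a2, by omega⟩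
            · rintro ⟨a1, a2, a3⟩; exact ⟨a1, a2, by omega⟩)
        rw [Nat.card_congr e1, Nat.card_congr e2]
        exact IH _ hlt _
      · haveI h1 : IsEmpty {w : List ℤ // ReverseDyck w ∧
            (↑w : Multiset ℤ) = S.filter (fun a => a ≠ b) ∧ d w + wt g.1 = k} :=
          ⟨by rintro ⟨w, _, _, h3⟩; omega⟩
        haveI h2 : IsEmpty {w : List ℤ // AffineDyck w ∧
            (↑w : Multiset ℤ) = S.filter (fun a => a ≠ b) ∧ d w + wt g.1 = k} :=
          ⟨by rintro ⟨w, _, _, h3⟩; omega⟩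
        rw [Nat.card_of_isEmpty, Nat.card_of_isEmpty]

end ART

/-- **Affine–reverse transport, counted.**  For every `M ≥ 0`, every finite
multiset `S` of integers contained in `[0, M]` and every `k ≥ 0`, the number
of reverse `[0, M]` Dyck sequences with entry multiset `S` and `di = k`
equals the number of affine `[0, M]` Dyck sequences with entry multiset `S`
and `di = k`. -/
theorem affine_reverse_transport (M : ℤ) (hM : 0 ≤ M) (S : Multiset ℤ)
    (hS : ∀ a ∈ S, 0 ≤ a ∧ a ≤ M) (k : ℕ) :
    Nat.card {x : List ℤ //
      ReverseDyck x ∧ (∀ a ∈ x, 0 ≤ a ∧ a ≤ M) ∧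
      (x : Multiset ℤ) = S ∧ di x = k} =
    Nat.card {x : List ℤ //
      AffineDyck x ∧ (∀ a ∈ x, 0 ≤ a ∧ a ≤ M) ∧
      (x : Multiset ℤ) = S ∧ di x = k} := by
  have e1 : {x : List ℤ // ReverseDyck x ∧ (∀ a ∈ x, 0 ≤ a ∧ a ≤ M) ∧
      (x : Multiset ℤ) = S ∧ di x = k} ≃
      {x : List ℤ // ReverseDyck x ∧ (x : Multiset ℤ) = S ∧ ART.d x = k} :=
    Equiv.subtypeEquivRight (by
      intro x
      constructor
      · rintro ⟨h1, h2, h3, h4⟩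
        exact ⟨h1, h3, by rw [← ART.di_eq_d]; exact h4⟩
      · rintro ⟨h1, h3, h4⟩
        refine ⟨h1, ?_, h3, by rw [ART.di_eq_d]; exact h4⟩
        intro a ha
        exact hS a (by rw [← h3]; exact_mod_cast ha))
  have e2 : {x : List ℤ // AffineDyck x ∧ (∀ a ∈ x, 0 ≤ a ∧ a ≤ M) ∧
      (x : Multiset ℤ) = S ∧ di x = k} ≃
      {x : List ℤ // AffineDyck x ∧ (x : Multiset ℤ) = S ∧ ART.d x = k} :=
    Equiv.subtypeEquivRight (by
      intro x
      constructor
      · rintro ⟨h1, h2, h3, h4⟩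
        exact ⟨h1, h3, by rw [← ART.di_eq_d]; exact h4⟩
      · rintro ⟨h1, h3, h4⟩
        refine ⟨h1, ?_, h3, by rw [ART.di_eq_d]; exact h4⟩
        intro a ha
        exact hS a (by rw [← h3]; exact_mod_cast ha))
  rw [Nat.card_congr e1, Nat.card_congr e2]
  exact ART.key S k
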